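/- Closed form of the multi-step forward diffusion process: for every t ≥ 0, the marginal measure of the forward chain started at x₀ satisfies ν_t = N(√(ᾱ_t) · x₀, 1 − ᾱ_t), where ᾱ_t = ∏_{i=1}^{t} (1 − β_i). -/

import Mathlib

open MeasureTheory ProbabilityTheory
open scoped NNReal

open Real
open scoped ENNReal Real


lemma exp_shift_integral (b c : ℝ) : ∫ x : ℝ, rexp (-b * (x - c)^2) = Real.sqrt (π / b) := by
  rw [MeasureTheory.integral_sub_right_eq_self (fun x => rexp (-b * x ^ 2)) c]
  exact integral_gaussian b

lemma pdf_conv_integral (m : ℝ) {v w : ℝ≥0} (hv : v ≠ 0) (hw : w ≠ 0) (z : ℝ) :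
    ∫ x, gaussianPDFReal m v x * gaussianPDFReal 0 w (z - x) = gaussianPDFReal m (v + w) z := by
  have hV : (0:ℝ) < v := lt_of_le_of_ne v.coe_nonneg (by exact_mod_cast (Ne.symm hv))
  have hW : (0:ℝ) < w := lt_of_le_of_ne w.coe_nonneg (by exact_mod_cast (Ne.symm hw))
  have hVW : (0:ℝ) < (v:ℝ) + w := by positivity
  set b : ℝ := ((v:ℝ) + w) / (2 * v * w) with hb
  have hbpos : 0 < b := by positivity
  set c : ℝ := ((w:ℝ) * m + v * z) / ((v:ℝ) + w) with hc
  have key : ∀ x : ℝ, gaussianPDFReal m v x * gaussianPDFReal 0 w (z - x)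
      = ((√(2 * π * v))⁻¹ * (√(2 * π * w))⁻¹ * rexp (- (z - m)^2 / (2 * ((v:ℝ) + w))))
        * rexp (-b * (x - c)^2) := by
    intro x
    have hS : -(x - m)^2 / (2 * (v:ℝ)) + -(z - x - 0)^2 / (2 * (w:ℝ))
        = -(z - m)^2 / (2 * ((v:ℝ) + w)) + -b * (x - c)^2 := by
      rw [hb, hc]; field_simp; ring
    simp only [gaussianPDFReal]
    rw [mul_mul_mul_comm, ← Real.exp_add, hS, Real.exp_add, ← mul_assoc]
  rw [MeasureTheory.integral_congr_ae (Filter.Eventually.of_forall key), integral_const_mul,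
    exp_shift_integral]
  have hsq : Real.sqrt (π / b) = √(2 * π * v) * √(2 * π * w) * (√(2 * π * ((v:ℝ) + w)))⁻¹ := by
    rw [← Real.sqrt_inv, ← Real.sqrt_mul (by positivity), ← Real.sqrt_mul (by positivity)]
    congr 1
    rw [hb]
    field_simp
  rw [hsq, gaussianPDFReal]
  have h1 : (√(2 * π * (v:ℝ))) ≠ 0 := by positivity
  have h2 : (√(2 * π * (w:ℝ))) ≠ 0 := by positivity
  push_cast
  field_simp


lemma withDensity_conv (f g : ℝ → ℝ≥0∞) (hf : Measurable f) (hg : Measurable g) :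
    Measure.conv (volume.withDensity f) (volume.withDensity g)
      = volume.withDensity (fun z => ∫⁻ x, f x * g (z - x)) := by
  have hmeas : Measurable fun p : ℝ × ℝ => f p.2 * g (p.1 - p.2) :=
    (hf.comp measurable_snd).mul (hg.comp (measurable_fst.sub measurable_snd))
  ext s hs
  unfold Measure.conv
  rw [Measure.map_apply measurable_add hs,
    Measure.prod_apply (measurable_add hs)]
  have h1 : ∀ x : ℝ, (volume.withDensity g) (Prod.mk x ⁻¹' ((fun p : ℝ × ℝ => p.1 + p.2) ⁻¹' s))
      = ∫⁻ z, s.indicator (fun _ => (1:ℝ≥0∞)) z * g (z - x) := by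
    intro x
    have hA : MeasurableSet ((x + ·) ⁻¹' s) := hs.preimage (measurable_const.add measurable_id)
    have hpre : Prod.mk x ⁻¹' ((fun p : ℝ × ℝ => p.1 + p.2) ⁻¹' s) = (x + ·) ⁻¹' s := rfl
    rw [hpre, withDensity_apply _ hA, ← lintegral_indicator hA]
    rw [← lintegral_add_right_eq_self (μ := volume)
      (fun z => Set.indicator s (fun _ => (1:ℝ≥0∞)) z * g (z - x)) x]
    congr 1
    funext y
    by_cases h : x + y ∈ s
    · rw [Set.indicator_of_mem (show y ∈ (x + ·) ⁻¹' s from h),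
        Set.indicator_of_mem (show y + x ∈ s by rwa [add_comm])]
      simp
    · rw [Set.indicator_of_notMem (show y ∉ (x + ·) ⁻¹' s from h),
        Set.indicator_of_notMem (show y + x ∉ s by rwa [add_comm])]
      simp
  simp_rw [h1]
  have hgind : Measurable fun z : ℝ => s.indicator (fun _ => (1:ℝ≥0∞)) z :=
    measurable_const.indicator hs
  have hinner : Measurable fun x : ℝ => ∫⁻ z, s.indicator (fun _ => (1:ℝ≥0∞)) z * g (z - x) := by
    apply Measurable.lintegral_prod_right
      (f := fun x z => s.indicator (fun _ => (1:ℝ≥0∞)) z * g (z - x))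
    exact (hgind.comp measurable_snd).mul (hg.comp (measurable_snd.sub measurable_fst))
  rw [lintegral_withDensity_eq_lintegral_mul _ hf hinner]
  rw [withDensity_apply _ hs, ← lintegral_indicator hs]
  have hswap := lintegral_lintegral_swap (μ := (volume : Measure ℝ)) (ν := (volume : Measure ℝ))
    (f := fun x z => f x * (s.indicator (fun _ => (1:ℝ≥0∞)) z * g (z - x)))
    (((hf.comp measurable_fst).mul
      ((hgind.comp measurable_snd).mul
        (hg.comp (measurable_snd.sub measurable_fst)))).aemeasurable)
  calc ∫⁻ x, ((f : ℝ → ℝ≥0∞) * fun x => ∫⁻ z, s.indicator (fun _ => (1:ℝ≥0∞)) z * g (z - x)) x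
      = ∫⁻ x, ∫⁻ z, f x * (s.indicator (fun _ => (1:ℝ≥0∞)) z * g (z - x)) := by
        congr 1; funext x
        simp only [Pi.mul_apply]
        have hm1 : Measurable fun z : ℝ => s.indicator (fun _ => (1:ℝ≥0∞)) z * g (z - x) :=
          hgind.mul (hg.comp (measurable_id.sub measurable_const))
        rw [lintegral_const_mul _ hm1]
    _ = ∫⁻ z, ∫⁻ x, f x * (s.indicator (fun _ => (1:ℝ≥0∞)) z * g (z - x)) := hswap
    _ = ∫⁻ z, s.indicator (fun _ => (1:ℝ≥0∞)) z * ∫⁻ x, f x * g (z - x) := by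
        congr 1; funext z
        rw [show (fun x => f x * (s.indicator (fun _ => (1:ℝ≥0∞)) z * g (z - x)))
            = fun x => s.indicator (fun _ => (1:ℝ≥0∞)) z * (f x * g (z - x)) from by
          funext x; ring]
        have hm2 : Measurable fun x : ℝ => f x * g (z - x) :=
          hf.mul (hg.comp (measurable_const.sub measurable_id))
        rw [lintegral_const_mul _ hm2]
    _ = ∫⁻ z, s.indicator (fun z => ∫⁻ x, f x * g (z - x)) z := by
        congr 1; funext z
        simp only [Set.indicator]
        by_cases h : z ∈ s <;> simp [h]


lemma gaussianPDF_lintegral_conv (m : ℝ) {v w : ℝ≥0} (hv : v ≠ 0) (hw : w ≠ 0) (z : ℝ) :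
    ∫⁻ x, gaussianPDF m v x * gaussianPDF 0 w (z - x) = gaussianPDF m (v + w) z := by
  have hW : (0:ℝ) < w := lt_of_le_of_ne w.coe_nonneg (by exact_mod_cast (Ne.symm hw))
  have hint : Integrable (fun x => gaussianPDFReal m v x * gaussianPDFReal 0 w (z - x)) := by
    have hb : ∃ C, ∀ x : ℝ, ‖gaussianPDFReal 0 w (z - x)‖ ≤ C := by
      refine ⟨(√(2 * π * w))⁻¹, fun x => ?_⟩
      rw [Real.norm_eq_abs, abs_of_nonneg (gaussianPDFReal_nonneg _ _ _)]
      unfold gaussianPDFReal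
      have h1 : rexp (-(z - x - 0) ^ 2 / (2 * (w:ℝ))) ≤ 1 := by
        rw [Real.exp_le_one_iff]
        apply div_nonpos_of_nonpos_of_nonneg
        · simp [sq_nonneg]
        · positivity
      calc (√(2 * π * w))⁻¹ * rexp (-(z - x - 0) ^ 2 / (2 * (w:ℝ)))
          ≤ (√(2 * π * w))⁻¹ * 1 := by
            apply mul_le_mul_of_nonneg_left h1 (by positivity)
        _ = (√(2 * π * w))⁻¹ := mul_one _
    have := (integrable_gaussianPDFReal m v).bdd_mul
      (((measurable_gaussianPDFReal 0 w).comp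
        (measurable_const.sub measurable_id)).aestronglyMeasurable) (ae_of_all _ hb.choose_spec)
    simpa [mul_comm] using this
  have hnn : 0 ≤ᵐ[volume] fun x => gaussianPDFReal m v x * gaussianPDFReal 0 w (z - x) :=
    Filter.Eventually.of_forall fun x =>
      mul_nonneg (gaussianPDFReal_nonneg _ _ _) (gaussianPDFReal_nonneg _ _ _)
  unfold gaussianPDF
  calc ∫⁻ x, ENNReal.ofReal (gaussianPDFReal m v x) * ENNReal.ofReal (gaussianPDFReal 0 w (z - x))
      = ∫⁻ x, ENNReal.ofReal (gaussianPDFReal m v x * gaussianPDFReal 0 w (z - x)) := by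
        congr 1; funext x
        rw [ENNReal.ofReal_mul (gaussianPDFReal_nonneg _ _ _)]
    _ = ENNReal.ofReal (∫ x, gaussianPDFReal m v x * gaussianPDFReal 0 w (z - x)) :=
        (ofReal_integral_eq_lintegral_ofReal hint hnn).symm
    _ = ENNReal.ofReal (gaussianPDFReal m (v + w) z) := by rw [pdf_conv_integral m hv hw z]


lemma gaussianReal_conv (m : ℝ) (v w : ℝ≥0) :
    Measure.conv (gaussianReal m v) (gaussianReal 0 w) = gaussianReal m (v + w) := by
  by_cases hv : v = 0
  · subst hv
    rw [gaussianReal_zero_var, zero_add]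
    unfold Measure.conv
    rw [Measure.dirac_prod, Measure.map_map measurable_add measurable_prodMk_left]
    have : ((fun p : ℝ × ℝ => p.1 + p.2) ∘ Prod.mk m) = (m + ·) := rfl
    rw [this, gaussianReal_map_const_add, zero_add]
  · by_cases hw : w = 0
    · subst hw
      rw [gaussianReal_zero_var, add_zero]
      exact Measure.conv_dirac_zero _
    · rw [gaussianReal_of_var_ne_zero _ hv, gaussianReal_of_var_ne_zero _ hw,
        withDensity_conv _ _ (measurable_gaussianPDF _ _) (measurable_gaussianPDF _ _),
        gaussianReal_of_var_ne_zero _ (by simp [hv])]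
      congr 1
      funext z
      exact gaussianPDF_lintegral_conv m hv hw z


/-- Closed form of the multi-step forward diffusion process: for every `t ≥ 0`, the
marginal measure of the forward chain started at `x₀` satisfies
`ν_t = N(√(ᾱ_t) · x₀, 1 − ᾱ_t)` where `ᾱ_t = ∏_{i=1}^{t} (1 − β_i)`. -/
theorem forward_diffusion_closed_form
    (x₀ : ℝ) (β : ℕ → ℝ≥0) (hβ : ∀ i, β i ≤ 1)
    (ν : ℕ → Measure ℝ)
    (hν0 : ν 0 = Measure.dirac x₀)
    (hν : ∀ t : ℕ, 1 ≤ t →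
      ν t = Measure.conv
        (Measure.map (fun x : ℝ => Real.sqrt (1 - (β t : ℝ)) * x) (ν (t - 1)))
        (gaussianReal 0 (β t))) :
    ∀ t : ℕ,
      ν t = gaussianReal
        (Real.sqrt ((∏ i ∈ Finset.Icc 1 t, (1 - β i) : ℝ≥0) : ℝ) * x₀)
        (1 - ∏ i ∈ Finset.Icc 1 t, (1 - β i)) := by
  have hαle : ∀ t : ℕ, (∏ i ∈ Finset.Icc 1 t, (1 - β i)) ≤ 1 :=
    fun t => Finset.prod_le_one (fun i _ => zero_le) (fun i _ => tsub_le_self)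
  intro t
  induction t with
  | zero =>
    have he : Finset.Icc 1 0 = (∅ : Finset ℕ) := by simp
    rw [hν0, he]
    simp [gaussianReal_zero_var]
  | succ t ih =>
    rw [hν (t + 1) (Nat.le_add_left 1 t)]
    simp only [Nat.add_sub_cancel]
    rw [ih, gaussianReal_map_const_mul, gaussianReal_conv]
    set a : ℝ≥0 := ∏ i ∈ Finset.Icc 1 t, (1 - β i) with ha
    have hprod : (∏ i ∈ Finset.Icc 1 (t + 1), (1 - β i)) = a * (1 - β (t + 1)) := by
      rw [← Finset.prod_Icc_succ_top (Nat.le_add_left 1 t)]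
    have hb1 : (β (t + 1) : ℝ) ≤ 1 := by exact_mod_cast hβ (t + 1)
    have hcoe : ((1 - β (t + 1) : ℝ≥0) : ℝ) = 1 - (β (t + 1) : ℝ) := by
      rw [NNReal.coe_sub (hβ (t + 1)), NNReal.coe_one]
    have hsq : Real.sqrt (1 - (β (t + 1) : ℝ)) ^ 2 = ((1 - β (t + 1) : ℝ≥0) : ℝ) := by
      rw [hcoe, Real.sq_sqrt (by linarith)]
    have hmean : Real.sqrt (1 - (β (t + 1) : ℝ)) * (Real.sqrt (a : ℝ) * x₀)
        = Real.sqrt ((∏ i ∈ Finset.Icc 1 (t + 1), (1 - β i) : ℝ≥0) : ℝ) * x₀ := by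
      rw [hprod]
      push_cast [hcoe]
      rw [Real.sqrt_mul (by positivity)]
      ring
    rw [hmean]
    congr 1
    apply NNReal.coe_injective
    have hle : a * (1 - β (t + 1)) ≤ 1 := mul_le_one' (hαle t) tsub_le_self
    push_cast [hprod, NNReal.coe_sub (hαle t), NNReal.coe_sub (hβ (t + 1)),
      NNReal.coe_sub hle, NNReal.coe_mk, hcoe]
    rw [hsq, hcoe]
    simp only [ha]
    rw [NNReal.coe_sub (hαle t)]
    push_cast
    ring
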